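/- Let m ∈ [0,1], k ≥ 1 an integer, and fix OPT > 0. Suppose for each r ∈ {1,...,k}: a_r - a_{r-1} ≥ (b_{r-1} - a_{r-1})/k and b_{r-1} ≥ m·OPT + (1-m)(1-1/k)^{r-1}·OPT, with a_0 ≥ 0. Then a_k ≥ (m(1-(1-1/k)^k) + (1-m)(1-1/k)^{k-1})·OPT. -/

import Mathlib

theorem stmt_14 (k : ℕ) (hk : 1 ≤ k) (m OPT : ℝ) (hm0 : 0 ≤ m) (hm1 : m ≤ 1)
    (hOPT : 0 < OPT) (a b : ℕ → ℝ) (ha0 : 0 ≤ a 0)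
    (hrec : ∀ r, 1 ≤ r → r ≤ k → a r - a (r - 1) ≥ (b (r - 1) - a (r - 1)) / (k : ℝ))
    (hb : ∀ r, 1 ≤ r → r ≤ k →
      b (r - 1) ≥ m * OPT + (1 - m) * (1 - 1 / (k : ℝ)) ^ (r - 1) * OPT) :
    a k ≥ (m * (1 - (1 - 1 / (k : ℝ)) ^ k) +
      (1 - m) * (1 - 1 / (k : ℝ)) ^ (k - 1)) * OPT := by
  have hk0 : (0:ℝ) < (k:ℝ) := by exact_mod_cast hk
  set q : ℝ := 1 - 1 / (k : ℝ) with hq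
  have hk1 : (1:ℝ) ≤ (k:ℝ) := by exact_mod_cast hk
  have hq0 : 0 ≤ q := by
    have : 1 / (k:ℝ) ≤ 1 := by rw [div_le_one hk0]; exact hk1
    simp only [hq]; linarith
  have key : ∀ r : ℕ, r ≤ k →
      (m * (1 - q ^ r) + (1 - m) * ((r : ℝ) / (k : ℝ)) * q ^ (r - 1)) * OPT ≤ a r := by
    intro r
    induction r with
    | zero => intro _; simpa using ha0
    | succ s ih =>
      intro hsk
      have hs : s ≤ k := Nat.le_of_succ_le hsk
      have hL := ih hs
      have hrec' := hrec (s+1) (by omega) hsk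
      have hb' := hb (s+1) (by omega) hsk
      simp only [Nat.add_sub_cancel] at hrec' hb'
      have hstep : q * a s + b s / (k:ℝ) ≤ a (s+1) := by
        have heq : q * a s + b s / (k:ℝ) = a s + (b s - a s) / (k:ℝ) := by
          simp only [hq]; field_simp; ring
        linarith [hrec']
      have h1 : q * ((m * (1 - q ^ s) + (1 - m) * ((s : ℝ) / (k : ℝ)) * q ^ (s - 1)) * OPT)
          ≤ q * a s := mul_le_mul_of_nonneg_left hL hq0
      have h2 : (m * OPT + (1 - m) * q ^ s * OPT) / (k:ℝ) ≤ b s / (k:ℝ) := by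
        gcongr
      have hident :
          (m * (1 - q ^ (s+1)) + (1 - m) * (((s:ℝ)+1) / (k : ℝ)) * q ^ s) * OPT
          = q * ((m * (1 - q ^ s) + (1 - m) * ((s : ℝ) / (k : ℝ)) * q ^ (s - 1)) * OPT)
            + (m * OPT + (1 - m) * q ^ s * OPT) / (k:ℝ) := by
        rcases s with _ | t
        · simp only [Nat.add_sub_cancel, pow_zero, pow_one, Nat.cast_zero]
          simp only [hq, Nat.zero_sub, pow_zero]; field_simp; ring_nf; field_simp; ring
        · simp only [Nat.add_sub_cancel, pow_succ]
          simp only [hq]; field_simp; ring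
      push_cast
      rw [hident]
      push_cast at h1 h2 ⊢
      linarith
  have hkey := key k le_rfl
  rw [div_self hk0.ne'] at hkey
  simpa [ge_iff_le, mul_one] using hkey.trans_eq' (by ring)
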